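/- Let K be a field, a, b integers with 2 ≤ a ≤ b and g = gcd(a,b), and let j be an integer with 1 ≤ j ≤ g − 2. Let A = {0, 1, …, g−j−1} ∪ {g−1, g} and I = I_A. Then the least integer k ≥ 1 such that (I^k)² = (x^{ka}, y^{kb})·I^k is exactly j; that is, the reduction number of I^k with respect to (x^{ka}, y^{kb}) equals 1 for k = j and is different from 1 for all 1 ≤ k < j. -/
import Mathlib


open MvPolynomial Pointwise

/-- The monomial `x^c y^d` in `K[x,y]`. -/
noncomputable def mono (K : Type*) [Field K] (c d : ℕ) : MvPolynomial (Fin 2) K :=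
  X 0 ^ c * X 1 ^ d

/-- The ideal `J = (x^a, y^b)`. -/
noncomputable def Jab (K : Type*) [Field K] (a b : ℕ) : Ideal (MvPolynomial (Fin 2) K) :=
  Ideal.span {mono K a 0, mono K 0 b}

/-- For `A ⊆ {0,…,g}` with `g = gcd(a,b)`, the ideal `I_A` generated by the
monomials `x^(i·(a/g)) y^(b − i·(b/g))` for `i ∈ A`. -/
noncomputable def IA (K : Type*) [Field K] (a b : ℕ) (A : Finset ℕ) :
    Ideal (MvPolynomial (Fin 2) K) :=
  Ideal.span ((fun i : ℕ =>
    mono K (i * (a / Nat.gcd a b)) (b - i * (b / Nat.gcd a b))) '' (A : Set ℕ))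

noncomputable def expv (c d : ℕ) : Fin 2 →₀ ℕ :=
  Finsupp.single 0 c + Finsupp.single 1 d

lemma expv_apply0 (c d : ℕ) : expv c d 0 = c := by
  simp [expv, Finsupp.single_apply]

lemma expv_apply1 (c d : ℕ) : expv c d 1 = d := by
  simp [expv, Finsupp.single_apply]

lemma mono_eq_monomial (K : Type*) [Field K] (c d : ℕ) :
    mono K c d = monomial (expv c d) (1 : K) := by
  rw [mono, expv, X_pow_eq_monomial, X_pow_eq_monomial, monomial_mul, one_mul]

lemma mono_mul (K : Type*) [Field K] (c d e f : ℕ) :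
    mono K c d * mono K e f = mono K (c+e) (d+f) := by
  simp only [mono, pow_add]; ring

noncomputable def Mm (K : Type*) [Field K] (g α β s N : ℕ) : MvPolynomial (Fin 2) K :=
  mono K (s*α) ((N*g - s)*β)

lemma Mm_mul (K : Type*) [Field K] (g α β s N t M : ℕ) (h1 : s ≤ N*g) (h2 : t ≤ M*g) :
    Mm K g α β s N * Mm K g α β t M = Mm K g α β (s+t) (N+M) := by
  have e3 : (N+M)*g = N*g + M*g := Nat.add_mul _ _ _
  rw [Mm, Mm, Mm, mono_mul,
    show s*α + t*α = (s+t)*α by ring,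
    show (N*g - s)*β + (M*g - t)*β = ((N+M)*g - (s+t))*β by
      rw [← Nat.add_mul]; congr 1; omega]

def Aset (g j : ℕ) : Finset ℕ := Finset.range (g - j) ∪ {g - 1, g}

noncomputable def Isp (K : Type*) [Field K] (g α β j : ℕ) : Ideal (MvPolynomial (Fin 2) K) :=
  Ideal.span ((fun i => Mm K g α β i 1) '' ((Aset g j : Finset ℕ) : Set ℕ))

lemma mem_Aset_iff (g j i : ℕ) : i ∈ Aset g j ↔ i < g - j ∨ i = g - 1 ∨ i = g := by
  simp [Aset]; tauto

lemma gen_mem (K : Type*) [Field K] (g α β j i : ℕ) (hi : i ∈ Aset g j) :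
    Mm K g α β i 1 ∈ Isp K g α β j :=
  Ideal.subset_span ⟨i, by simpa using hi, rfl⟩

lemma gen_mem_pow (K : Type*) [Field K] (g α β j i : ℕ) (hi : i ∈ Aset g j) :
    Mm K g α β i 1 ∈ (Isp K g α β j)^1 := by
  rw [pow_one]; exact gen_mem K g α β j i hi

lemma mem_mul_pow (K : Type*) [Field K] (g α β j s N t M : ℕ)
    (h1 : s ≤ N*g) (h2 : t ≤ M*g)
    (hs : Mm K g α β s N ∈ (Isp K g α β j)^N) (ht : Mm K g α β t M ∈ (Isp K g α β j)^M) :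
    Mm K g α β (s+t) (N+M) ∈ (Isp K g α β j)^(N+M) := by
  rw [pow_add, ← Mm_mul K g α β s N t M h1 h2]
  exact Ideal.mul_mem_mul hs ht

lemma Mm_zero_zero (K : Type*) [Field K] (g α β : ℕ) : Mm K g α β 0 0 = 1 := by
  simp [Mm, mono]

lemma mem_pow_zero (K : Type*) [Field K] (g α β j : ℕ) :
    Mm K g α β 0 0 ∈ (Isp K g α β j)^0 := by
  rw [Mm_zero_zero, pow_zero, Ideal.one_eq_top]; trivial

lemma mem_pow_small (K : Type*) [Field K] (g α β j : ℕ) (hg : j + 2 ≤ g) :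
    ∀ q R, R ≤ q*(g-j-1) → Mm K g α β R q ∈ (Isp K g α β j)^q := by
  intro q
  induction q with
  | zero => intro R hR; have : R = 0 := by omega
            subst this; exact mem_pow_zero K g α β j
  | succ q ih =>
    intro R hR
    set e := min R (g-j-1) with he
    have heA : e ∈ Aset g j := by rw [mem_Aset_iff]; left; omega
    have hsucc : (q+1)*(g-j-1) = q*(g-j-1) + (g-j-1) := Nat.succ_mul _ _
    have h1 : R - e ≤ q*(g-j-1) := by omega
    have hqg : q*(g-j-1) ≤ q*g := Nat.mul_le_mul_left _ (by omega)
    have := mem_mul_pow K g α β j (R-e) q e 1 (by omega) (by omega)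
      (ih (R-e) h1) (gen_mem_pow K g α β j e heA)
    rwa [show R - e + e = R by omega] at this

lemma mem_pow_big (K : Type*) [Field K] (g α β j : ℕ) (hg : j + 2 ≤ g) :
    ∀ p B, p*(g-1) ≤ B → B ≤ p*g → Mm K g α β B p ∈ (Isp K g α β j)^p := by
  intro p
  induction p with
  | zero => intro B h1 h2; have : B = 0 := by omega
            subst this; exact mem_pow_zero K g α β j
  | succ p ih =>
    intro B h1 h2
    have hs1 : (p+1)*(g-1) = p*(g-1) + (g-1) := Nat.succ_mul _ _
    have hs2 : (p+1)*g = p*g + g := Nat.succ_mul _ _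
    have hpg : p*(g-1) ≤ p*g := Nat.mul_le_mul_left _ (by omega)
    by_cases hc : p*(g-1) + g ≤ B
    · have heA : g ∈ Aset g j := by rw [mem_Aset_iff]; right; right; rfl
      have := mem_mul_pow K g α β j (B-g) p g 1 (by omega) (by omega)
        (ih (B-g) (by omega) (by omega)) (gen_mem_pow K g α β j g heA)
      rwa [show B - g + g = B by omega] at this
    · have heA : g-1 ∈ Aset g j := by rw [mem_Aset_iff]; right; left; rfl
      have := mem_mul_pow K g α β j (B-(g-1)) p (g-1) 1 (by omega) (by omega)
        (ih (B-(g-1)) (by omega) (by omega)) (gen_mem_pow K g α β j (g-1) heA)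
      rwa [show B - (g-1) + (g-1) = B by omega] at this

lemma one_le_mul_aux : ∀ x y : ℕ, 1 ≤ x → 1 ≤ y → x + y ≤ x*y + 1 := by
  rintro (_|x) (_|y) hx hy
  · omega
  · omega
  · omega
  · have : (x+1)*(y+1) = x*y + x + y + 1 := by ring
    omega

lemma exists_p (g j : ℕ) (hg : j + 2 ≤ g) (hj : 1 ≤ j) (s : ℕ) (hs : s ≤ j*g) :
    ∃ p, p ≤ j ∧ p*(g-1) ≤ s ∧ s ≤ p*g + (j-p)*(g-j-1) := by
  have key : ∀ p, p ≤ j → s ≤ p*g + (j-p)*(g-j-1) →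
      ∃ p', p' ≤ j ∧ p'*(g-1) ≤ s ∧ s ≤ p'*g + (j-p')*(g-j-1) := by
    intro p
    induction p with
    | zero => intro _ h; exact ⟨0, by omega, by simp, h⟩
    | succ p ih =>
      intro hpj h
      by_cases hc : (p+1)*(g-1) ≤ s
      · exact ⟨p+1, hpj, hc, h⟩
      · refine ih (by omega) ?_
        have e1 : (p+1)*(g-1) + (p+1)*1 = (p+1)*g := by
          rw [← Nat.mul_add]; congr 1; omega
        have e2 : (p+1)*g = p*g + g := Nat.succ_mul _ _
        have hxy : (j-p) + (g-j-1) ≤ (j-p)*(g-j-1) + 1 :=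
          one_le_mul_aux _ _ (by omega) (by omega)
        omega
  refine key j le_rfl ?_
  simp [hs]

def Tset (g j n : ℕ) : Set ℕ :=
  {s | ∃ p, p ≤ n ∧ p*(g-1) ≤ s ∧ s ≤ p*g + (n-p)*(g-j-1)}

lemma Tset_le (g j n s : ℕ) (hg : j + 2 ≤ g) (hs : s ∈ Tset g j n) : s ≤ n*g := by
  obtain ⟨p, hp1, hp2, hp3⟩ := hs
  have h1 : (n-p)*(g-j-1) ≤ (n-p)*g := Nat.mul_le_mul_left _ (by omega)
  have h2 : p*g + (n-p)*g = n*g := by rw [← Nat.add_mul]; congr 1; omega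
  omega

lemma span_Mm_eq (K : Type*) [Field K] (g α β n : ℕ) (T : Set ℕ) :
    Ideal.span ((fun s => Mm K g α β s n) '' T) =
      Ideal.span ((fun e => monomial e (1:K)) ''
        ((fun s => expv (s*α) ((n*g - s)*β)) '' T)) := by
  rw [Set.image_image]
  congr 1
  apply Set.image_congr'
  intro s
  exact mono_eq_monomial K _ _

lemma not_mem_span_Mm (K : Type*) [Field K] (g α β n : ℕ) (T : Set ℕ) (s : ℕ)
    (hle : ∀ u ∈ T, ¬ (u*α ≤ s*α ∧ (n*g - u)*β ≤ (n*g - s)*β)) :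
    Mm K g α β s n ∉ Ideal.span ((fun u => Mm K g α β u n) '' T) := by
  classical
  rw [span_Mm_eq]
  intro hmem
  rw [MvPolynomial.mem_ideal_span_monomial_image] at hmem
  have hsup : (Mm K g α β s n).support = {expv (s*α) ((n*g - s)*β)} := by
    rw [Mm, mono_eq_monomial, support_monomial, if_neg one_ne_zero]
  obtain ⟨e, he, hle'⟩ := hmem (expv (s*α) ((n*g - s)*β)) (by rw [hsup]; simp)
  obtain ⟨u, hu, rfl⟩ := he
  refine hle u hu ⟨?_, ?_⟩
  · have := hle' 0
    rwa [expv_apply0, expv_apply0] at this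
  · have := hle' 1
    rwa [expv_apply1, expv_apply1] at this

-- every s ≤ j*g is "representable": Mm s j ∈ I^j
lemma mem_pow_of_le (K : Type*) [Field K] (g α β j : ℕ) (hg : j + 2 ≤ g) (hj : 1 ≤ j)
    (s : ℕ) (hs : s ≤ j*g) : Mm K g α β s j ∈ (Isp K g α β j)^j := by
  obtain ⟨p, hp1, hp2, hp3⟩ := exists_p g j hg hj s hs
  have hpg : p*(g-1) ≤ p*g := Nat.mul_le_mul_left _ (by omega)
  have hqg : (j-p)*(g-j-1) ≤ (j-p)*g := Nat.mul_le_mul_left _ (by omega)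
  by_cases hc : s ≤ p*g
  · have h1 := mem_pow_big K g α β j hg p s hp2 hc
    have h2 := mem_pow_small K g α β j hg (j-p) 0 (by omega)
    have := mem_mul_pow K g α β j s p 0 (j-p) hc (by omega) h1 h2
    rwa [show s + 0 = s by omega, show p + (j-p) = j by omega] at this
  · have h1 := mem_pow_big K g α β j hg p (p*g) hpg le_rfl
    have h2 := mem_pow_small K g α β j hg (j-p) (s - p*g) (by omega)
    have := mem_mul_pow K g α β j (p*g) p (s - p*g) (j-p) le_rfl (by omega) h1 h2
    rwa [show p*g + (s - p*g) = s by omega, show p + (j-p) = j by omega] at this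

lemma pow_le_span (K : Type*) [Field K] (g α β j : ℕ) (hg : j + 2 ≤ g) :
    ∀ n, (Isp K g α β j)^n ≤ Ideal.span ((fun s => Mm K g α β s n) '' Tset g j n) := by
  intro n
  induction n with
  | zero =>
    rw [pow_zero, Ideal.one_eq_top]
    have h0 : (0 : ℕ) ∈ Tset g j 0 := ⟨0, le_rfl, by simp, by simp⟩
    have h1 : (1 : MvPolynomial (Fin 2) K) ∈
        Ideal.span ((fun s => Mm K g α β s 0) '' Tset g j 0) :=
      Ideal.subset_span ⟨0, h0, Mm_zero_zero K g α β⟩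
    rw [← Ideal.eq_top_iff_one] at h1
    rw [h1]
  | succ n ih =>
    calc (Isp K g α β j)^(n+1) = (Isp K g α β j)^n * Isp K g α β j := pow_succ _ _
    _ ≤ Ideal.span ((fun s => Mm K g α β s n) '' Tset g j n) * Isp K g α β j :=
        Ideal.mul_mono ih le_rfl
    _ = Ideal.span (((fun s => Mm K g α β s n) '' Tset g j n) *
        ((fun i => Mm K g α β i 1) '' ((Aset g j : Finset ℕ) : Set ℕ))) := by
        rw [Isp, Ideal.span_mul_span']
    _ ≤ Ideal.span ((fun s => Mm K g α β s (n+1)) '' Tset g j (n+1)) := by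
        rw [Ideal.span_le]
        rintro x hx
        rw [Set.mem_mul] at hx
        obtain ⟨y, hy, z, hz, rfl⟩ := hx
        obtain ⟨s, hs, rfl⟩ := hy
        obtain ⟨i, hi, rfl⟩ := hz
        rw [Finset.mem_coe, mem_Aset_iff] at hi
        have hsle : s ≤ n*g := Tset_le g j n s hg hs
        have hile : i ≤ 1*g := by omega
        rw [Mm_mul K g α β s n i 1 hsle hile]
        refine Ideal.subset_span ⟨s+i, ?_, rfl⟩
        obtain ⟨p, hp1, hp2, hp3⟩ := hs
        rcases hi with hi | hi
        · refine ⟨p, by omega, by omega, ?_⟩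
          have e1 : (n+1-p)*(g-j-1) = (n-p)*(g-j-1) + (g-j-1) := by
            rw [show n+1-p = (n-p)+1 by omega, Nat.succ_mul]
          omega
        · refine ⟨p+1, by omega, ?_, ?_⟩
          · have e1 : (p+1)*(g-1) = p*(g-1) + (g-1) := Nat.succ_mul _ _
            omega
          · have e1 : (p+1)*g = p*g + g := Nat.succ_mul _ _
            have e2 : n+1-(p+1) = n-p := by omega
            rw [e1, e2]
            omega

lemma Jab_eq (K : Type*) [Field K] (g α β k a b : ℕ)
    (hka : k*a = (k*g)*α) (hkb : k*b = (k*g)*β) :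
    Jab K (k*a) (k*b) = Ideal.span ((fun s => Mm K g α β s k) '' {0, k*g}) := by
  have h1 : Mm K g α β 0 k = mono K 0 (k*b) := by
    rw [Mm, Nat.zero_mul, Nat.sub_zero, hkb]
  have h2 : Mm K g α β (k*g) k = mono K (k*a) 0 := by
    rw [Mm, Nat.sub_self, Nat.zero_mul, hka]
  rw [Jab, Set.image_pair, h1, h2, Set.pair_comm]

theorem stmt18 (K : Type*) [Field K] (a b : ℕ) (ha : 2 ≤ a) (hab : a ≤ b)
    (j : ℕ) (hj1 : 1 ≤ j) (hj2 : j ≤ Nat.gcd a b - 2) :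
    let g := Nat.gcd a b
    let I := IA K a b (Finset.range (g - j) ∪ ({g - 1, g} : Finset ℕ))
    ((I ^ j) ^ 2 = Jab K (j * a) (j * b) * I ^ j ∧ I ^ j ≠ Jab K (j * a) (j * b))
    ∧ ∀ k : ℕ, 1 ≤ k → k < j → (I ^ k) ^ 2 ≠ Jab K (k * a) (k * b) * I ^ k := by
  intro g I
  have hI0 : I = IA K a b (Finset.range (Nat.gcd a b - j) ∪
      ({Nat.gcd a b - 1, Nat.gcd a b} : Finset ℕ)) := rfl
  obtain ⟨G, hG⟩ : ∃ G, Nat.gcd a b = G := ⟨_, rfl⟩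
  rw [hG] at hI0 hj2
  have hdvda : G ∣ a := hG ▸ Nat.gcd_dvd_left a b
  have hdvdb : G ∣ b := hG ▸ Nat.gcd_dvd_right a b
  have hGa : G ≤ a := Nat.le_of_dvd (by omega) hdvda
  have hgj : j + 2 ≤ G := by omega
  obtain ⟨α, hα'⟩ : ∃ m, a / G = m := ⟨_, rfl⟩
  obtain ⟨β, hβ'⟩ : ∃ m, b / G = m := ⟨_, rfl⟩
  have ha' : a = G * α := by rw [← hα', Nat.mul_div_cancel' hdvda]
  have hb' : b = G * β := by rw [← hβ', Nat.mul_div_cancel' hdvdb]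
  have hα : 1 ≤ α := by rw [← hα']; exact Nat.div_pos hGa (by omega)
  have hβ : 1 ≤ β := by rw [← hβ']; exact Nat.div_pos (by omega) (by omega)
  have hIA : IA K a b (Finset.range (G - j) ∪ ({G - 1, G} : Finset ℕ)) = Isp K G α β j := by
    rw [IA, Isp]
    congr 1
    apply Set.image_congr
    intro i hi
    have hiA : i ∈ Aset G j := Finset.mem_coe.mp hi
    have hiG : i ≤ G := by rw [mem_Aset_iff] at hiA; omega
    have ec : i * (a / Nat.gcd a b) = i * α := by rw [hG, hα']
    have ed : b - i * (b / Nat.gcd a b) = (1*G - i) * β := by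
      rw [hG, hβ', one_mul, Nat.sub_mul, ← hb']
    rw [ec, ed, Mm]
  rw [hI0, hIA]
  have hja : j*a = (j*G)*α := by rw [ha']; ring
  have hjb : j*b = (j*G)*β := by rw [hb']; ring
  have hGj : 1*G ≤ j*G := Nat.mul_le_mul hj1 le_rfl
  have hx0 : Mm K G α β (j*G) j = mono K (j*a) 0 := by
    rw [Mm, Nat.sub_self, Nat.zero_mul, hja]
  have hy0 : Mm K G α β 0 j = mono K 0 (j*b) := by
    rw [Mm, Nat.zero_mul, Nat.sub_zero, hjb]
  refine ⟨⟨?_, ?_⟩, ?_⟩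
  · -- the equality at power j
    apply le_antisymm
    · rw [sq, ← pow_add]
      refine le_trans (pow_le_span K G α β j hgj (j+j)) ?_
      rw [Ideal.span_le]
      rintro x ⟨s, hs, rfl⟩
      have hs2 : s ≤ (j+j)*G := Tset_le G j (j+j) s hgj hs
      have hadd : (j+j)*G = j*G + j*G := Nat.add_mul _ _ _
      by_cases hc : s ≤ j*G
      · have h0 : Mm K G α β 0 j ∈ Jab K (j*a) (j*b) := by
          rw [hy0]; exact Ideal.subset_span (Set.mem_insert_of_mem _ rfl)
        have hmem := Ideal.mul_mem_mul h0 (mem_pow_of_le K G α β j hgj hj1 s hc)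
        rwa [Mm_mul K G α β 0 j s j (by omega) hc, Nat.zero_add] at hmem
      · have h0 : Mm K G α β (j*G) j ∈ Jab K (j*a) (j*b) := by
          rw [hx0]; exact Ideal.subset_span (Set.mem_insert _ _)
        have hmem := Ideal.mul_mem_mul h0
          (mem_pow_of_le K G α β j hgj hj1 (s - j*G) (by omega))
        rwa [Mm_mul K G α β (j*G) j (s - j*G) j le_rfl (by omega),
          show j*G + (s - j*G) = s by omega] at hmem
    · have hJle : Jab K (j*a) (j*b) ≤ (Isp K G α β j)^j := by
        rw [Jab, Ideal.span_le]
        rintro x hx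
        simp only [Set.mem_insert_iff, Set.mem_singleton_iff] at hx
        rcases hx with rfl | rfl
        · rw [← hx0]; exact mem_pow_of_le K G α β j hgj hj1 (j*G) le_rfl
        · rw [← hy0]; exact mem_pow_of_le K G α β j hgj hj1 0 (by omega)
      calc Jab K (j*a) (j*b) * (Isp K G α β j)^j
          ≤ (Isp K G α β j)^j * (Isp K G α β j)^j := Ideal.mul_mono hJle le_rfl
        _ = ((Isp K G α β j)^j)^2 := (sq _).symm
  · -- I^j ≠ Jab
    intro heq
    have hm : Mm K G α β 1 j ∈ (Isp K G α β j)^j :=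
      mem_pow_of_le K G α β j hgj hj1 1 (by omega)
    rw [heq, Jab_eq K G α β j a b hja hjb] at hm
    refine not_mem_span_Mm K G α β j {0, j*G} 1 ?_ hm
    rintro u hu ⟨c1, c2⟩
    simp only [Set.mem_insert_iff, Set.mem_singleton_iff] at hu
    rcases hu with rfl | rfl
    · have := Nat.le_of_mul_le_mul_right c2 (show 0 < β by omega)
      omega
    · have := Nat.le_of_mul_le_mul_right c1 (show 0 < α by omega)
      omega
  · -- powers below j
    intro k hk1 hkj heq
    have hka : k*a = (k*G)*α := by rw [ha']; ring
    have hkb : k*b = (k*G)*β := by rw [hb']; ring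
    have h3k : k*3 ≤ k*G := Nat.mul_le_mul le_rfl (by omega)
    have e0 : k*(G-1) + k*1 = k*G := by rw [← Nat.mul_add]; congr 1; omega
    have m1 := mem_pow_big K G α β j hgj k (k*G - k) (by omega) (by omega)
    have m2 := mem_pow_big K G α β j hgj k (k*G - 1) (by omega) (by omega)
    have hmem : Mm K G α β ((k*G - k) + (k*G - 1)) (k+k) ∈ ((Isp K G α β j)^k)^2 := by
      rw [sq]
      have := Ideal.mul_mem_mul m1 m2
      rwa [Mm_mul K G α β _ k _ k (by omega) (by omega)] at this
    rw [heq] at hmem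
    have hsub : Jab K (k*a) (k*b) * (Isp K G α β j)^k ≤
        Ideal.span ((fun u => Mm K G α β u (k+k)) ''
          {u | ∃ t ∈ Tset G j k, u = t ∨ u = k*G + t}) := by
      rw [Jab_eq K G α β k a b hka hkb]
      calc Ideal.span ((fun s => Mm K G α β s k) '' {0, k*G}) * (Isp K G α β j)^k
          ≤ Ideal.span ((fun s => Mm K G α β s k) '' {0, k*G}) *
            Ideal.span ((fun s => Mm K G α β s k) '' Tset G j k) :=
            Ideal.mul_mono le_rfl (pow_le_span K G α β j hgj k)
        _ = Ideal.span (((fun s => Mm K G α β s k) '' {0, k*G}) *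
            ((fun s => Mm K G α β s k) '' Tset G j k)) := Ideal.span_mul_span' _ _
        _ ≤ _ := by
            rw [Ideal.span_le]
            rintro x hx
            rw [Set.mem_mul] at hx
            obtain ⟨y, hy, z, hz, rfl⟩ := hx
            obtain ⟨s, hs, rfl⟩ := hy
            obtain ⟨t, ht, rfl⟩ := hz
            simp only [Set.mem_insert_iff, Set.mem_singleton_iff] at hs
            have htk : t ≤ k*G := Tset_le G j k t hgj ht
            have hsk : s ≤ k*G := by rcases hs with rfl | rfl <;> omega
            rw [Mm_mul K G α β s k t k hsk htk]
            refine Ideal.subset_span ⟨s+t, ⟨t, ht, ?_⟩, rfl⟩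
            rcases hs with rfl | rfl
            · left; omega
            · right; omega
    refine not_mem_span_Mm K G α β (k+k) _ _ ?_ (hsub hmem)
    rintro u ⟨t, ht, hu⟩ ⟨c1, c2⟩
    have htk : t ≤ k*G := Tset_le G j k t hgj ht
    obtain ⟨p, hp1, hp2, hp3⟩ := ht
    have hadd : (k+k)*G = k*G + k*G := Nat.add_mul _ _ _
    have d1 : u ≤ (k*G - k) + (k*G - 1) :=
      Nat.le_of_mul_le_mul_right c1 (show 0 < α by omega)
    have d2 : (k+k)*G - u ≤ (k+k)*G - ((k*G - k) + (k*G - 1)) :=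
      Nat.le_of_mul_le_mul_right c2 (show 0 < β by omega)
    rcases hu with rfl | rfl
    · omega
    · by_cases hpk : p = k
      · subst hpk; omega
      · have e1 : (k-p)*(G-j-1) + (k-p)*(j+1) = (k-p)*G := by
          rw [← Nat.mul_add]; congr 1; omega
        have e2 : p*G + (k-p)*G = k*G := by
          rw [← Nat.add_mul]; congr 1; omega
        have e3 : 1*(j+1) ≤ (k-p)*(j+1) := Nat.mul_le_mul (by omega) le_rfl
        omega
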